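/- Let K ≥ 2 be even, let m ≥ 1 be an integer, and set N = mK. (i) If α ∈ [0,1), then for any mixed strategy σ whose marginal distribution at every battlefield is uniform on the even integers {0, 2, …, 2m}, the symmetric profile (σ, σ) is not a Nash equilibrium of the Colonel Blotto game B_α(N,K). (ii) If α ∈ (1,2], then for any mixed strategies σ^A with marginal uniform on the odd integers {1, 3, …, 2m−1} at every battlefield and σ^B with marginal uniform on the even integers {0, 2, …, 2m} at every battlefield, the profile (σ^A, σ^B) is not a Nash equilibrium of B_α(N,K). -/

import Mathlib

open Finset

/-- The set of pure strategies: allocations of `N` units of the resource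
over `K` battlefields. -/
def pureStrats (K N : ℕ) : Finset (Fin K → ℕ) := Finset.Nat.antidiagonalTuple K N

/-- Payoff in the Colonel Blotto game `B_α(N,K)` of playing `s` against `t`:
`π(s,t) = Σ_k [1_{s_k > t_k} + (α/2)·1_{s_k = t_k}]`. -/
noncomputable def payoff (α : ℝ) {K : ℕ} (s t : Fin K → ℕ) : ℝ :=
  ∑ k, ((if t k < s k then (1 : ℝ) else 0) + α / 2 * (if s k = t k then 1 else 0))

/-- `σ` is a mixed strategy: a probability distribution on the pure strategies. -/
def IsMixed (K N : ℕ) (σ : (Fin K → ℕ) → ℝ) : Prop :=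
  (∀ s, 0 ≤ σ s) ∧ (∀ s, s ∉ pureStrats K N → σ s = 0) ∧
    ∑ s ∈ pureStrats K N, σ s = 1

/-- Expected payoff of the mixed strategy `σ` against the mixed strategy `τ`. -/
noncomputable def expPayoff (α : ℝ) (K N : ℕ) (σ τ : (Fin K → ℕ) → ℝ) : ℝ :=
  ∑ s ∈ pureStrats K N, ∑ t ∈ pureStrats K N, σ s * τ t * payoff α s t

/-- `(σA, σB)` is a mixed-strategy Nash equilibrium: both are mixed strategies and
neither player can strictly improve by a unilateral deviation. -/
def IsNashEq (α : ℝ) (K N : ℕ) (σA σB : (Fin K → ℕ) → ℝ) : Prop :=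
  IsMixed K N σA ∧ IsMixed K N σB ∧
    (∀ σ', IsMixed K N σ' → expPayoff α K N σ' σB ≤ expPayoff α K N σA σB) ∧
    (∀ τ', IsMixed K N τ' → expPayoff α K N τ' σA ≤ expPayoff α K N σB σA)

/-- The marginal distribution of `σ` at battlefield `k`, evaluated at `x`. -/
noncomputable def marginal (K N : ℕ) (σ : (Fin K → ℕ) → ℝ) (k : Fin K) (x : ℕ) : ℝ :=
  ∑ s ∈ (pureStrats K N).filter (fun s => s k = x), σ s

/-- `σ` induces uniform marginals on `{0,1,…,2m}` at every battlefield. -/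
def UniformMarginals (K N m : ℕ) (σ : (Fin K → ℕ) → ℝ) : Prop :=
  ∀ k x, marginal K N σ k x = if x ≤ 2 * m then (1 : ℝ) / (2 * m + 1) else 0

/-- `σ`'s marginal at every battlefield is uniform on the odd integers `{1,3,…,2m-1}`. -/
def OddUniformMarginals (K N m : ℕ) (σ : (Fin K → ℕ) → ℝ) : Prop :=
  ∀ k x, marginal K N σ k x = if x % 2 = 1 ∧ x < 2 * m then (1 : ℝ) / m else 0

/-- `σ`'s marginal at every battlefield is uniform on the even integers `{0,2,…,2m}`. -/
def EvenUniformMarginals (K N m : ℕ) (σ : (Fin K → ℕ) → ℝ) : Prop :=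
  ∀ k x, marginal K N σ k x = if x % 2 = 0 ∧ x ≤ 2 * m then (1 : ℝ) / (m + 1) else 0

namespace B17

lemma mem_pure {K N : ℕ} {s : Fin K → ℕ} : s ∈ pureStrats K N ↔ ∑ k, s k = N :=
  Finset.Nat.mem_antidiagonalTuple

lemma comp_le {K N : ℕ} {s : Fin K → ℕ} (hs : s ∈ pureStrats K N) (k : Fin K) : s k ≤ N := by
  rw [mem_pure] at hs
  calc s k ≤ ∑ i, s i := Finset.single_le_sum (fun i _ => Nat.zero_le _) (mem_univ k)
  _ = N := hs

noncomputable def hfun (α : ℝ) (K N : ℕ) (τ : (Fin K → ℕ) → ℝ) (k : Fin K) (x : ℕ) : ℝ :=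
  (∑ y ∈ range x, marginal K N τ k y) + α / 2 * marginal K N τ k x

lemma marginal_eq (K N : ℕ) (τ : (Fin K → ℕ) → ℝ) (k : Fin K) (x : ℕ) :
    marginal K N τ k x = ∑ t ∈ pureStrats K N, if t k = x then τ t else 0 := by
  rw [marginal, Finset.sum_filter]

lemma sum_payoff (α : ℝ) (K N : ℕ) (τ : (Fin K → ℕ) → ℝ) (s : Fin K → ℕ) :
    ∑ t ∈ pureStrats K N, τ t * payoff α s t = ∑ k, hfun α K N τ k (s k) := by
  simp only [payoff, Finset.mul_sum]
  rw [Finset.sum_comm]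
  refine Finset.sum_congr rfl fun k _ => ?_
  have key : ∀ t : Fin K → ℕ,
      τ t * ((if t k < s k then (1:ℝ) else 0) + α / 2 * (if s k = t k then 1 else 0))
        = (if t k < s k then τ t else 0) + α / 2 * (if t k = s k then τ t else 0) := by
    intro t
    split_ifs with h1 h2 h3 <;> try ring
    all_goals (exfalso; omega)
  rw [Finset.sum_congr rfl fun t _ => key t, Finset.sum_add_distrib, ← Finset.mul_sum]
  rw [hfun, ← marginal_eq]
  congr 1
  have : ∀ t ∈ pureStrats K N, (if t k < s k then τ t else 0)
      = ∑ y ∈ range (s k), if t k = y then τ t else 0 := by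
    intro t _
    simp [Finset.sum_ite_eq, mem_range]
  rw [Finset.sum_congr rfl this, Finset.sum_comm]
  exact Finset.sum_congr rfl fun y _ => (marginal_eq K N τ k y).symm

lemma expPayoff_eq (α : ℝ) (K N : ℕ) (σ τ : (Fin K → ℕ) → ℝ) :
    expPayoff α K N σ τ
      = ∑ k, ∑ x ∈ range (N+1), marginal K N σ k x * hfun α K N τ k x := by
  rw [expPayoff]
  have h1 : ∀ s ∈ pureStrats K N,
      ∑ t ∈ pureStrats K N, σ s * τ t * payoff α s t
        = ∑ k, σ s * hfun α K N τ k (s k) := by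
    intro s _
    rw [← Finset.mul_sum, ← sum_payoff α K N τ s, Finset.mul_sum]
    exact Finset.sum_congr rfl fun t _ => by ring
  rw [Finset.sum_congr rfl h1, Finset.sum_comm]
  refine Finset.sum_congr rfl fun k _ => ?_
  have h2 : ∀ x ∈ range (N+1), marginal K N σ k x * hfun α K N τ k x
      = ∑ s ∈ pureStrats K N, if s k = x then σ s * hfun α K N τ k x else 0 := by
    intro x _
    rw [marginal_eq, Finset.sum_mul]
    exact Finset.sum_congr rfl fun s _ => by split_ifs <;> simp
  rw [Finset.sum_congr rfl h2, Finset.sum_comm]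
  refine Finset.sum_congr rfl fun s hs => ?_
  rw [Finset.sum_ite_eq, if_pos (mem_range.mpr (Nat.lt_succ_of_le (comp_le hs k)))]

noncomputable def dirac {K : ℕ} (s0 : Fin K → ℕ) : (Fin K → ℕ) → ℝ :=
  fun s => if s = s0 then 1 else 0

lemma dirac_mixed {K N : ℕ} {s0 : Fin K → ℕ} (h : s0 ∈ pureStrats K N) :
    IsMixed K N (dirac s0) := by
  refine ⟨fun s => by unfold dirac; positivity,
    fun s hs => by unfold dirac; rw [if_neg]; intro h'; exact hs (h' ▸ h), ?_⟩
  simp [dirac, Finset.sum_ite_eq', h]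

lemma expPayoff_dirac (α : ℝ) (K N : ℕ) {s0 : Fin K → ℕ} (h : s0 ∈ pureStrats K N)
    (τ : (Fin K → ℕ) → ℝ) :
    expPayoff α K N (dirac s0) τ = ∑ k, hfun α K N τ k (s0 k) := by
  rw [expPayoff, ← sum_payoff α K N τ s0]
  have h1 : ∀ s ∈ pureStrats K N,
      ∑ t ∈ pureStrats K N, dirac s0 s * τ t * payoff α s t
        = if s = s0 then ∑ t ∈ pureStrats K N, τ t * payoff α s t else 0 := by
    intro s _
    unfold dirac
    split_ifs with hss <;> simp [hss]
  rw [Finset.sum_congr rfl h1, Finset.sum_ite_eq', if_pos h]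

lemma pair_sum {M : Type*} [AddCommMonoid M] (n : ℕ) (f : ℕ → M) :
    ∑ x ∈ range (2*n), f x = ∑ j ∈ range n, (f (2*j) + f (2*j+1)) := by
  induction n with
  | zero => simp
  | succ n ih =>
    rw [show 2*(n+1) = (2*n+1)+1 by ring, Finset.sum_range_succ, Finset.sum_range_succ, ih,
      Finset.sum_range_succ, add_assoc]

lemma gauss1 (n : ℕ) : ∑ j ∈ range n, ((j:ℝ) + 1) = n*(n+1)/2 := by
  induction n with
  | zero => simp
  | succ n ih =>
    rw [Finset.sum_range_succ, ih]
    push_cast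
    ring

lemma F_even (m : ℕ) : ∀ j ≤ m + 1,
    ∑ y ∈ range (2*j), (if y % 2 = 0 ∧ y ≤ 2*m then (1:ℝ)/(m+1) else 0) = j / (m+1) := by
  intro j
  induction j with
  | zero => simp
  | succ j ih =>
    intro hj
    rw [show 2*(j+1) = (2*j+1)+1 by ring, Finset.sum_range_succ, Finset.sum_range_succ,
      ih (by omega)]
    rw [if_pos (by omega : (2*j) % 2 = 0 ∧ 2*j ≤ 2*m),
      if_neg (by omega : ¬((2*j+1) % 2 = 0 ∧ 2*j+1 ≤ 2*m))]
    push_cast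
    ring

lemma F_odd (m : ℕ) (j : ℕ) (hj : j ≤ m) :
    ∑ y ∈ range (2*j+1), (if y % 2 = 0 ∧ y ≤ 2*m then (1:ℝ)/(m+1) else 0) = (j+1) / (m+1) := by
  rw [Finset.sum_range_succ, F_even m j (by omega),
    if_pos (by omega : (2*j) % 2 = 0 ∧ 2*j ≤ 2*m)]
  ring

lemma sum_range_stable {f : ℕ → ℝ} {c n₁ n₂ : ℕ} (h1 : c ≤ n₁) (h2 : n₁ ≤ n₂)
    (hf : ∀ x, c ≤ x → f x = 0) :
    ∑ x ∈ range n₂, f x = ∑ x ∈ range n₁, f x := by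
  refine (Finset.sum_subset (Finset.range_subset_range.mpr h2) fun x _ hx => hf x ?_).symm
  have : n₁ ≤ x := by simpa [mem_range, not_lt] using hx
  omega

noncomputable def pE (m : ℕ) : ℕ → ℝ :=
  fun x => if x % 2 = 0 ∧ x ≤ 2*m then (1:ℝ)/(m+1) else 0

noncomputable def pO (m : ℕ) : ℕ → ℝ :=
  fun x => if x % 2 = 1 ∧ x < 2*m then (1:ℝ)/m else 0

noncomputable def g (α : ℝ) (m : ℕ) (x : ℕ) : ℝ :=
  (∑ y ∈ range x, pE m y) + α/2 * pE m x

lemma g_even (α : ℝ) (m j : ℕ) (hj : j ≤ m) :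
    g α m (2*j) = (j:ℝ)/(m+1) + α/2 * (1/(m+1)) := by
  rw [g, show (∑ y ∈ range (2*j), pE m y) = (j:ℝ)/(m+1) from F_even m j (by omega)]
  rw [show pE m (2*j) = 1/((m:ℝ)+1) from if_pos (by omega)]

lemma g_odd (α : ℝ) (m j : ℕ) (hj : j ≤ m) :
    g α m (2*j+1) = ((j:ℝ)+1)/(m+1) := by
  rw [g, show (∑ y ∈ range (2*j+1), pE m y) = ((j:ℝ)+1)/(m+1) from F_odd m j hj]
  rw [show pE m (2*j+1) = 0 from if_neg (by omega)]
  ring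

lemma g_zero (α : ℝ) (m : ℕ) : g α m 0 = α/2 * (1/((m:ℝ)+1)) := by
  simpa using g_even α m 0 (Nat.zero_le m)

lemma g_one (α : ℝ) (m : ℕ) (hm : 1 ≤ m) : g α m 1 = 1/((m:ℝ)+1) := by
  simpa using g_odd α m 0 (by omega)

lemma g_lastodd (α : ℝ) (m : ℕ) (hm : 1 ≤ m) : g α m (2*m-1) = (m:ℝ)/((m:ℝ)+1) := by
  have h := g_odd α m (m-1) (by omega)
  rw [show 2*(m-1)+1 = 2*m-1 by omega] at h
  rw [h, Nat.cast_sub hm]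
  ring_nf

lemma g_lasteven (α : ℝ) (m : ℕ) : g α m (2*m) = (m:ℝ)/(m+1) + α/2 * (1/(m+1)) :=
  g_even α m m le_rfl

lemma pE_vanish (m : ℕ) : ∀ x, 2*m+1 ≤ x → pE m x = 0 :=
  fun x hx => if_neg (by omega)

lemma pO_vanish (m : ℕ) : ∀ x, 2*m ≤ x → pO m x = 0 :=
  fun x hx => if_neg (by omega)

lemma sum_pE_g (α : ℝ) (m M : ℕ) (hM : 2*m+1 ≤ M) :
    ∑ x ∈ range M, pE m x * g α m x = ((m:ℝ)/2 + α/2) / (m+1) := by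
  have hv : ∀ x, 2*m+1 ≤ x → pE m x * g α m x = 0 := fun x hx => by
    rw [pE_vanish m x hx, zero_mul]
  rw [sum_range_stable le_rfl hM hv,
    ← sum_range_stable le_rfl (by omega : 2*m+1 ≤ 2*(m+1)) hv, pair_sum]
  have key : ∀ j ∈ range (m+1), (pE m (2*j) * g α m (2*j) + pE m (2*j+1) * g α m (2*j+1))
      = ((j:ℝ)+1) * (1/((m:ℝ)+1))^2 + (α/2 - 1) * (1/((m:ℝ)+1))^2 := by
    intro j hj
    rw [mem_range] at hj
    rw [g_even α m j (by omega),
      show pE m (2*j) = 1/((m:ℝ)+1) from if_pos (by omega),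
      show pE m (2*j+1) = 0 from if_neg (by omega), zero_mul, add_zero]
    have h1 : ((m:ℝ)+1) ≠ 0 := by positivity
    field_simp
    ring
  rw [Finset.sum_congr rfl key, Finset.sum_add_distrib, ← Finset.sum_mul, gauss1,
    Finset.sum_const, card_range, nsmul_eq_mul]
  have h1 : ((m:ℝ)+1) ≠ 0 := by positivity
  field_simp
  push_cast
  ring

lemma sum_pO_g (α : ℝ) (m M : ℕ) (hm : 1 ≤ m) (hM : 2*m ≤ M) :
    ∑ x ∈ range M, pO m x * g α m x = 1/2 := by
  have hv : ∀ x, 2*m ≤ x → pO m x * g α m x = 0 := fun x hx => by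
    rw [pO_vanish m x hx, zero_mul]
  rw [sum_range_stable le_rfl hM hv, pair_sum]
  have key : ∀ j ∈ range m, (pO m (2*j) * g α m (2*j) + pO m (2*j+1) * g α m (2*j+1))
      = ((j:ℝ)+1) * (1/((m:ℝ)*(m+1))) := by
    intro j hj
    rw [mem_range] at hj
    rw [g_odd α m j (by omega),
      show pO m (2*j) = 0 from if_neg (by omega),
      show pO m (2*j+1) = 1/(m:ℝ) from if_pos (by omega), zero_mul, zero_add]
    have h1 : ((m:ℝ)+1) ≠ 0 := by positivity
    have h2 : (m:ℝ) ≠ 0 := by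
      have : (1:ℝ) ≤ (m:ℝ) := by exact_mod_cast hm
      linarith
    field_simp
  rw [Finset.sum_congr rfl key, ← Finset.sum_mul, gauss1]
  have h1 : ((m:ℝ)+1) ≠ 0 := by positivity
  have h2 : (m:ℝ) ≠ 0 := by
    have : (1:ℝ) ≤ (m:ℝ) := by exact_mod_cast hm
    linarith
  field_simp

lemma hfun_even {K N m : ℕ} (α : ℝ) (τ : (Fin K → ℕ) → ℝ)
    (hτ : EvenUniformMarginals K N m τ) (k : Fin K) (x : ℕ) :
    hfun α K N τ k x = g α m x := by
  have hτ' : ∀ k x, marginal K N τ k x = pE m x := hτ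
  simp only [hfun, g, hτ']

lemma expPayoff_vs_even {α : ℝ} {K N m : ℕ} {σ τ : (Fin K → ℕ) → ℝ}
    (hτ : EvenUniformMarginals K N m τ) (p : ℕ → ℝ) (hσ : ∀ k x, marginal K N σ k x = p x) :
    expPayoff α K N σ τ = K * ∑ x ∈ range (N+1), p x * g α m x := by
  rw [expPayoff_eq]
  have h1 : ∀ k ∈ (univ : Finset (Fin K)),
      (∑ x ∈ range (N+1), marginal K N σ k x * hfun α K N τ k x)
        = ∑ x ∈ range (N+1), p x * g α m x :=
    fun k _ => Finset.sum_congr rfl fun x _ => by rw [hσ, hfun_even α τ hτ]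
  rw [Finset.sum_congr rfl h1, Finset.sum_const, card_univ, Fintype.card_fin, nsmul_eq_mul]

lemma sum_fin_eq {M : Type*} [AddCommMonoid M] {K n : ℕ} (hK : K = 2*n) (f : ℕ → M) :
    ∑ k : Fin K, f (k : ℕ) = ∑ j ∈ range n, (f (2*j) + f (2*j+1)) := by
  rw [Fin.sum_univ_eq_sum_range f K, hK, pair_sum]

end B17

open B17 in
theorem stmt17 (K m N : ℕ) (hK : 2 ≤ K) (hKeven : Even K) (hm : 1 ≤ m) (hN : N = m * K) :
    (∀ α : ℝ, 0 ≤ α → α < 1 → ∀ σ, IsMixed K N σ → EvenUniformMarginals K N m σ →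
      ¬ IsNashEq α K N σ σ) ∧
    (∀ α : ℝ, 1 < α → α ≤ 2 → ∀ σA σB, IsMixed K N σA → IsMixed K N σB →
      OddUniformMarginals K N m σA → EvenUniformMarginals K N m σB →
      ¬ IsNashEq α K N σA σB) := by
  obtain ⟨n, hn⟩ := hKeven
  have hK2 : K = 2*n := by omega
  have hn1 : 1 ≤ n := by omega
  have hNm : 2*m ≤ N := by
    calc 2*m = m*2 := by ring
    _ ≤ m*K := Nat.mul_le_mul_left m hK
    _ = N := hN.symm
  have hmR : (1:ℝ) ≤ (m:ℝ) := by exact_mod_cast hm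
  have hnR : (1:ℝ) ≤ (n:ℝ) := by exact_mod_cast hn1
  have hKR : (K:ℝ) = 2*(n:ℝ) := by exact_mod_cast hK2
  have hm1 : (0:ℝ) < (m:ℝ)+1 := by linarith
  constructor
  · intro α hα0 hα1 σ hmix hE hNash
    set devf : ℕ → ℕ := fun i => if i % 2 = 0 then 1 else 2*m-1 with hdevf
    have hs0 : (fun k : Fin K => devf (k:ℕ)) ∈ pureStrats K N := by
      rw [mem_pure, sum_fin_eq hK2 devf]
      have h0 : ∀ j ∈ range n, devf (2*j) + devf (2*j+1) = 2*m := by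
        intro j _
        simp only [hdevf]
        rw [if_pos (by omega), if_neg (by omega)]
        omega
      rw [Finset.sum_congr rfl h0, Finset.sum_const, card_range, smul_eq_mul, hN, hK2]
      ring
    have hD : expPayoff α K N (dirac (fun k : Fin K => devf (k:ℕ))) σ = (n:ℝ) := by
      rw [expPayoff_dirac α K N hs0 σ]
      have h1 : ∀ k ∈ (univ : Finset (Fin K)),
          hfun α K N σ k (devf (k:ℕ)) = g α m (devf (k:ℕ)) :=
        fun k _ => hfun_even α σ hE k _
      rw [Finset.sum_congr rfl h1, sum_fin_eq hK2 (fun i => g α m (devf i))]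
      have h2 : ∀ j ∈ range n, (g α m (devf (2*j)) + g α m (devf (2*j+1)))
          = (1/((m:ℝ)+1)) + (m:ℝ)/((m:ℝ)+1) := by
        intro j _
        simp only [hdevf]
        rw [if_pos (by omega), if_neg (by omega), g_one α m hm, g_lastodd α m hm]
      rw [Finset.sum_congr rfl h2, Finset.sum_const, card_range, nsmul_eq_mul]
      rw [← add_div, add_comm (1:ℝ), div_self hm1.ne', mul_one]
    have hV : expPayoff α K N σ σ = (n:ℝ) * (((m:ℝ)+α)/((m:ℝ)+1)) := by
      rw [expPayoff_vs_even hE (pE m) hE, sum_pE_g α m (N+1) (by omega), hKR]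
      ring
    have hle := hNash.2.2.1 _ (dirac_mixed hs0)
    rw [hD, hV] at hle
    have hfrac : ((m:ℝ)+α)/((m:ℝ)+1) < 1 := (div_lt_one hm1).mpr (by linarith)
    have hstrict : (n:ℝ) * (((m:ℝ)+α)/((m:ℝ)+1)) < (n:ℝ) * 1 :=
      mul_lt_mul_of_pos_left hfrac (by linarith)
    rw [mul_one] at hstrict
    linarith
  · intro α hα1 hα2 σA σB hmixA hmixB hO hE hNash
    set devf : ℕ → ℕ := fun i => if i % 2 = 0 then 0 else 2*m with hdevf
    have hs0 : (fun k : Fin K => devf (k:ℕ)) ∈ pureStrats K N := by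
      rw [mem_pure, sum_fin_eq hK2 devf]
      have h0 : ∀ j ∈ range n, devf (2*j) + devf (2*j+1) = 2*m := by
        intro j _
        simp only [hdevf]
        rw [if_pos (by omega), if_neg (by omega)]
        omega
      rw [Finset.sum_congr rfl h0, Finset.sum_const, card_range, smul_eq_mul, hN, hK2]
      ring
    have hD : expPayoff α K N (dirac (fun k : Fin K => devf (k:ℕ))) σB
        = (n:ℝ) * (((m:ℝ)+α)/((m:ℝ)+1)) := by
      rw [expPayoff_dirac α K N hs0 σB]
      have h1 : ∀ k ∈ (univ : Finset (Fin K)),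
          hfun α K N σB k (devf (k:ℕ)) = g α m (devf (k:ℕ)) :=
        fun k _ => hfun_even α σB hE k _
      rw [Finset.sum_congr rfl h1, sum_fin_eq hK2 (fun i => g α m (devf i))]
      have h2 : ∀ j ∈ range n, (g α m (devf (2*j)) + g α m (devf (2*j+1)))
          = α/2 * (1/((m:ℝ)+1)) + ((m:ℝ)/((m:ℝ)+1) + α/2 * (1/((m:ℝ)+1))) := by
        intro j _
        simp only [hdevf]
        rw [if_pos (by omega), if_neg (by omega), g_zero α m, g_lasteven α m]
      rw [Finset.sum_congr rfl h2, Finset.sum_const, card_range, nsmul_eq_mul]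
      field_simp
      ring
    have hV : expPayoff α K N σA σB = (n:ℝ) := by
      rw [expPayoff_vs_even hE (pO m) hO, sum_pO_g α m (N+1) hm (by omega), hKR]
      ring
    have hle := hNash.2.2.1 _ (dirac_mixed hs0)
    rw [hD, hV] at hle
    have hfrac : (1:ℝ) < ((m:ℝ)+α)/((m:ℝ)+1) := (one_lt_div hm1).mpr (by linarith)
    have hstrict : (n:ℝ) * 1 < (n:ℝ) * (((m:ℝ)+α)/((m:ℝ)+1)) :=
      mul_lt_mul_of_pos_left hfrac (by linarith)
    rw [mul_one] at hstrict
    linarith
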